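/- Let X_1,...,X_n be random variables with any joint distribution and 1 \le r \le n. Then for all x, F_{r:n}(x) = \sum_{j=0}^{r-1} (-1)^{r-1-j} \binom{n-j-1}{n-r} \sum_{S \subseteq {1,...,n}, |S| = n-j} F_{1:S}(x), where F_{r:n} is the CDF of the r-th order statistic and F_{1:S} is the CDF of min{X_i : i \in S}. -/

import Mathlib

open MeasureTheory
open scoped ENNReal
open Finset

lemma delta_lemma (a m : ℕ) :
    ∑ k ∈ Icc a m, (-1:ℤ)^(k-a) * (k.choose a) * (m.choose k) = if m = a then 1 else 0 := by
  rcases le_or_gt a m with h | h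
  · have key : ∀ k ∈ Icc a m, (-1:ℤ)^(k-a) * (k.choose a) * (m.choose k)
        = (m.choose a : ℤ) * ((-1:ℤ)^(k-a) * ((m-a).choose (k-a))) := by
      intro k hk
      simp only [mem_Icc] at hk
      have := Nat.choose_mul (n := m) (k := k) (s := a) hk.1
      have : (m.choose k : ℤ) * k.choose a = (m.choose a : ℤ) * (m-a).choose (k-a) := by
        exact_mod_cast congrArg (Nat.cast : ℕ → ℤ) this
      calc (-1:ℤ)^(k-a) * (k.choose a) * (m.choose k)
          = (-1:ℤ)^(k-a) * ((m.choose k : ℤ) * k.choose a) := by ring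
        _ = (m.choose a : ℤ) * ((-1:ℤ)^(k-a) * ((m-a).choose (k-a))) := by rw [this]; ring
    rw [Finset.sum_congr rfl key, ← Finset.mul_sum]
    have : ∑ k ∈ Icc a m, (-1:ℤ)^(k-a) * ((m-a).choose (k-a))
        = ∑ q ∈ range (m - a + 1), (-1:ℤ)^q * ((m-a).choose q) := by
      apply Finset.sum_nbij' (i := fun k => k - a) (j := fun q => a + q)
      · intro k hk; simp only [mem_Icc] at hk; simp only [mem_range]; omega
      · intro q hq; simp only [mem_range] at hq; simp only [mem_Icc]; omega
      · intro k hk; simp only [mem_Icc] at hk; omega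
      · intro q hq; omega
      · intro k hk; rfl
    rw [this, Int.alternating_sum_range_choose]
    rcases eq_or_lt_of_le h with rfl | h'
    · simp
    · rw [if_neg (by omega), if_neg (by omega), mul_zero]
  · rw [Finset.Icc_eq_empty (by omega), Finset.sum_empty, if_neg (by omega)]

lemma core_lemma (m : ℕ) : ∀ s : ℕ, 1 ≤ s →
    ∑ i ∈ Icc s m, (-1:ℤ)^(i-s) * ((i-1).choose (s-1)) * (m.choose i)
      = if s ≤ m then 1 else 0 := by
  induction m with
  | zero => intro s hs; rw [Finset.Icc_eq_empty (by omega), Finset.sum_empty, if_neg (by omega)]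
  | succ m ih =>
    intro s hs
    have split : ∀ i ∈ Icc s (m+1), (-1:ℤ)^(i-s) * ((i-1).choose (s-1)) * ((m+1).choose i)
        = (-1:ℤ)^(i-s) * ((i-1).choose (s-1)) * (m.choose i)
          + (-1:ℤ)^(i-s) * ((i-1).choose (s-1)) * (m.choose (i-1)) := by
      intro i hi
      simp only [mem_Icc] at hi
      have h1 : i = (i-1) + 1 := by omega
      have : (m+1).choose i = m.choose (i-1) + m.choose i := by
        conv_lhs => rw [h1]
        rw [Nat.choose_succ_succ]; exact congrArg (fun t => m.choose (i-1) + m.choose t) (by omega : (i-1).succ = i)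
      rw [this]
      push_cast
      ring
    rw [Finset.sum_congr rfl split, Finset.sum_add_distrib]
    have first : ∑ i ∈ Icc s (m+1), (-1:ℤ)^(i-s) * ((i-1).choose (s-1)) * (m.choose i)
        = if s ≤ m then 1 else 0 := by
      rw [← ih s hs]
      symm
      apply Finset.sum_subset (Finset.Icc_subset_Icc_right (by omega))
      intro i hi hni
      simp only [mem_Icc] at hi hni
      have : m < i := by omega
      rw [Nat.choose_eq_zero_of_lt this]
      simp
    have second : ∑ i ∈ Icc s (m+1), (-1:ℤ)^(i-s) * ((i-1).choose (s-1)) * (m.choose (i-1))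
        = if m = s - 1 then 1 else 0 := by
      rw [← delta_lemma (s-1) m]
      symm
      apply Finset.sum_nbij' (i := fun k => k + 1) (j := fun i => i - 1)
      · intro k hk; simp only [mem_Icc] at *; omega
      · intro i hi; simp only [mem_Icc] at *; omega
      · intro k _; omega
      · intro i hi; simp only [mem_Icc] at hi; omega
      · intro k hk
        simp only [mem_Icc] at hk
        have e1 : k - (s-1) = k + 1 - s := by omega
        have e2 : k + 1 - 1 = k := by omega
        rw [e1, e2]
    rw [first, second]
    by_cases h : s ≤ m
    · rw [if_pos h, if_neg (by omega), if_pos (by omega)]; norm_num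
    · by_cases h2 : m = s - 1
      · rw [if_neg h, if_pos h2, if_pos (by omega)]; norm_num
      · rw [if_neg h, if_neg h2, if_neg (by omega)]; norm_num

lemma core_lemma' (s m N : ℕ) (hs : 1 ≤ s) (hm : m ≤ N) :
    ∑ i ∈ Icc s N, (-1:ℤ)^(i-s) * ((i-1).choose (s-1)) * (m.choose i)
      = if s ≤ m then 1 else 0 := by
  rw [← core_lemma m s hs]
  symm
  apply Finset.sum_subset (Finset.Icc_subset_Icc_right hm)
  intro i hi hni
  simp only [mem_Icc] at hi hni
  rw [Nat.choose_eq_zero_of_lt (show m < i by omega)]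
  simp

-- reindexing j ∈ range r ↦ i = n - j ∈ Icc (n-r+1) n
lemma reindex_lemma (n r : ℕ) (hrn : r ≤ n) (f : ℕ → ℤ) :
    ∑ j ∈ range r, f (n - j) = ∑ i ∈ Icc (n - r + 1) n, f i := by
  apply Finset.sum_nbij' (i := fun j => n - j) (j := fun i => n - i)
  · intro j hj; simp only [mem_range] at hj; simp only [mem_Icc]; omega
  · intro i hi; simp only [mem_Icc] at hi; simp only [mem_range]; omega
  · intro j hj; simp only [mem_range] at hj; omega
  · intro i hi; simp only [mem_Icc] at hi; omega
  · intro j _; rfl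

lemma comb_lemma (n r t : ℕ) (hr : 1 ≤ r) (hrn : r ≤ n) (ht : t ≤ n) :
    ∑ j ∈ range r, (-1:ℤ)^(r-1-j) * ((n-j-1).choose (n-r)) *
        ((n.choose (n-j) : ℤ) - ((n-t).choose (n-j)))
      = if r ≤ t then 1 else 0 := by
  have key : ∀ m : ℕ, m ≤ n →
      ∑ j ∈ range r, (-1:ℤ)^(r-1-j) * ((n-j-1).choose (n-r)) * (m.choose (n-j))
        = if n - r + 1 ≤ m then 1 else 0 := by
    intro m hm
    calc ∑ j ∈ range r, (-1:ℤ)^(r-1-j) * ((n-j-1).choose (n-r)) * (m.choose (n-j))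
        = ∑ i ∈ Icc (n-r+1) n, (-1:ℤ)^(i-(n-r+1)) * ((i-1).choose ((n-r+1)-1)) * (m.choose i) := by
          rw [← reindex_lemma n r hrn]
          apply Finset.sum_congr rfl
          intro j hj
          simp only [mem_range] at hj
          have e1 : n - j - (n - r + 1) = r - 1 - j := by omega
          have e3 : n - r + 1 - 1 = n - r := by omega
          simp only [e1, e3]
      _ = if n - r + 1 ≤ m then 1 else 0 := core_lemma' (n-r+1) m n (by omega) hm
  have h1 := key n (le_refl n)
  have h2 := key (n - t) (by omega)
  have expand : ∀ j ∈ range r, (-1:ℤ)^(r-1-j) * ((n-j-1).choose (n-r)) *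
        ((n.choose (n-j) : ℤ) - ((n-t).choose (n-j)))
      = (-1:ℤ)^(r-1-j) * ((n-j-1).choose (n-r)) * (n.choose (n-j))
        - (-1:ℤ)^(r-1-j) * ((n-j-1).choose (n-r)) * ((n-t).choose (n-j)) := by
    intro j _; ring
  rw [Finset.sum_congr rfl expand, Finset.sum_sub_distrib, h1, h2]
  rw [if_pos (by omega)]
  by_cases h : r ≤ t
  · rw [if_neg (by omega), if_pos h]; norm_num
  · rw [if_pos (by omega), if_neg h]; norm_num

-- counting lemma
lemma count_lemma (n c : ℕ) (A : Finset (Fin n)) :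
    ∑ S ∈ powersetCard c (univ : Finset (Fin n)), (if ∃ i ∈ S, i ∈ A then (1:ℝ) else 0)
      = (n.choose c : ℝ) - ((n - A.card).choose c : ℝ) := by
  classical
  rw [Finset.sum_boole]
  have hsplit := Finset.card_filter_add_card_filter_not
    (s := powersetCard c (univ : Finset (Fin n))) (p := fun S => ∃ i ∈ S, i ∈ A)
  have hneg : (powersetCard c (univ : Finset (Fin n))).filter (fun S => ¬∃ i ∈ S, i ∈ A)
      = powersetCard c Aᶜ := by
    ext S
    simp only [mem_filter, mem_powersetCard, Finset.subset_univ, true_and, not_exists,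
      Finset.subset_iff, Finset.mem_compl]
    constructor
    · rintro ⟨⟨_, h2⟩, h3⟩; exact ⟨fun i hi hA => h3 i ⟨hi, hA⟩, h2⟩
    · rintro ⟨h1, h2⟩
      exact ⟨⟨fun i _ => Finset.mem_univ i, h2⟩, fun i hi => h1 hi.1 hi.2⟩
  have hcards : ((powersetCard c (univ : Finset (Fin n))).filter
        (fun S => ∃ i ∈ S, i ∈ A)).card = n.choose c - (n - A.card).choose c := by
    have h1 : (powersetCard c (univ : Finset (Fin n))).card = n.choose c := by
      rw [Finset.card_powersetCard]; simp
    have h2 : (powersetCard c Aᶜ).card = (n - A.card).choose c := by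
      rw [Finset.card_powersetCard, Finset.card_compl]; simp
    rw [hneg, h1] at hsplit
    omega
  rw [hcards]
  have hle : (n - A.card).choose c ≤ n.choose c := Nat.choose_le_choose c (by omega)
  push_cast [Nat.cast_sub hle]
  ring

lemma pointwise_lemma (n r : ℕ) (hr : 1 ≤ r) (hrn : r ≤ n) (A : Finset (Fin n)) :
    (if r ≤ A.card then (1:ℝ) else 0)
      = ∑ j ∈ range r, (-1:ℝ)^(r-1-j) * ((n-j-1).choose (n-r)) *
          ∑ S ∈ powersetCard (n-j) (univ : Finset (Fin n)),
            (if ∃ i ∈ S, i ∈ A then (1:ℝ) else 0) := by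
  have hA : A.card ≤ n := by
    simpa using Finset.card_le_univ A
  have key := comb_lemma n r A.card hr hrn hA
  have cast_key := congrArg (fun z : ℤ => (z : ℝ)) key
  push_cast at cast_key
  rw [Finset.sum_congr rfl (fun j _ => by rw [count_lemma n (n-j) A])]
  rw [cast_key]


/-- For arbitrary jointly distributed `X_1,...,X_n`,
`F_{r:n}(x) = ∑_{j=0}^{r-1} (-1)^{r-1-j} C(n-j-1, n-r) ∑_{|S| = n-j} F_{1:S}(x)`,
where `F_{r:n}(x) = P(at least r of the X_i are ≤ x)` is the CDF of the r-th order
statistic and `F_{1:S}(x) = P(min_{i ∈ S} X_i ≤ x) = P(∃ i ∈ S, X_i ≤ x)`. -/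
theorem stmt18 {Ω : Type*} [MeasurableSpace Ω] (μ : Measure Ω) [IsProbabilityMeasure μ]
    {n : ℕ} (X : Fin n → Ω → ℝ) (hX : ∀ i, Measurable (X i))
    (r : ℕ) (hr : 1 ≤ r) (hrn : r ≤ n) (x : ℝ) :
    (μ {ω | r ≤ (Finset.univ.filter (fun i => X i ω ≤ x)).card}).toReal
      = ∑ j ∈ Finset.range r, (-1 : ℝ) ^ (r - 1 - j) * ((n - j - 1).choose (n - r)) *
          ∑ S ∈ Finset.powersetCard (n - j) (Finset.univ : Finset (Fin n)),
            (μ {ω | ∃ i ∈ S, X i ω ≤ x}).toReal := by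

  classical
  have hmi : ∀ i, MeasurableSet {ω | X i ω ≤ x} :=
    fun i => measurableSet_le (hX i) measurable_const
  -- measurability of the "at least r" set
  have hf : Measurable (fun ω => (Finset.univ.filter (fun i => X i ω ≤ x)).card) := by
    have : (fun ω => (Finset.univ.filter (fun i => X i ω ≤ x)).card)
        = fun ω => ∑ i : Fin n, if X i ω ≤ x then 1 else 0 := by
      funext ω; rw [Finset.card_filter]
    rw [this]
    exact Finset.measurable_sum _ (fun i _ => Measurable.ite (hmi i) measurable_const measurable_const)
  have hE : MeasurableSet {ω | r ≤ (Finset.univ.filter (fun i => X i ω ≤ x)).card} :=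
    hf MeasurableSet.of_discrete
  have hES : ∀ S : Finset (Fin n), MeasurableSet {ω | ∃ i ∈ S, X i ω ≤ x} := by
    intro S
    have : {ω | ∃ i ∈ S, X i ω ≤ x} = ⋃ i ∈ S, {ω | X i ω ≤ x} := by
      ext ω; simp
    rw [this]
    exact S.measurableSet_biUnion (fun i _ => hmi i)
  -- indicator functions
  set g : Finset (Fin n) → Ω → ℝ :=
    fun S ω => ({ω | ∃ i ∈ S, X i ω ≤ x}).indicator (fun _ => (1:ℝ)) ω with hg
  have hgInt : ∀ S : Finset (Fin n), Integrable (g S) μ :=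
    fun S => (integrable_const (1:ℝ)).indicator (hES S)
  have step1 : ∀ j ∈ Finset.range r,
      (-1 : ℝ) ^ (r - 1 - j) * ((n - j - 1).choose (n - r)) *
          ∑ S ∈ Finset.powersetCard (n - j) (Finset.univ : Finset (Fin n)),
            (μ {ω | ∃ i ∈ S, X i ω ≤ x}).toReal
        = ∫ ω, (-1 : ℝ) ^ (r - 1 - j) * ((n - j - 1).choose (n - r)) *
            ∑ S ∈ Finset.powersetCard (n - j) (Finset.univ : Finset (Fin n)), g S ω ∂μ := by
    intro j _
    rw [integral_const_mul _ _, integral_finset_sum _ (fun S _ => hgInt S)]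
    congr 1
    apply Finset.sum_congr rfl
    intro S _
    exact (integral_indicator_one (hES S)).symm
  rw [Finset.sum_congr rfl step1,
    ← integral_finset_sum _ (fun j _ => (((integrable_finset_sum _ (fun S _ => hgInt S))).const_mul _)),
    ← Measure.real_def, ← integral_indicator_one hE]
  apply integral_congr_ae
  apply Filter.Eventually.of_forall
  intro ω
  have := pointwise_lemma n r hr hrn (Finset.univ.filter (fun i => X i ω ≤ x))
  simp only [Set.indicator_apply, Set.mem_setOf_eq, hg, Pi.one_apply]
  simp only [Finset.mem_filter, Finset.mem_univ, true_and] at this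
  exact this
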